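/- Let C_max be a maximum-weight cycle cover of G and let C_1, C_2 be cycle covers of G with w(C_1) ≥ OPT and w(C_2) ≥ OPT. Suppose the multiset of edges consisting of two copies of each edge of C_max, two copies of each edge of C_1, and two copies of each edge of C_2 can be partitioned into eight sets Z_1, …, Z_8 such that each Z_i is a collection of vertex-disjoint directed paths. Then there exists a Hamiltonian tour of G of weight at least (3/4)·OPT. -/

import Mathlib

set_option linter.unusedSectionVars false

section Aux

lemma chain_transGen' {V : Type*} {r : V → V → Prop} (f : ℕ → V) {m : ℕ}
    (hm : 0 < m) (h : ∀ k < m, r (f k) (f (k+1))) :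
    Relation.TransGen r (f 0) (f m) := by
  induction m with
  | zero => omega
  | succ m ih =>
    rcases Nat.eq_zero_or_pos m with rfl | hm'
    · exact Relation.TransGen.single (h 0 (by omega))
    · exact (ih hm' (fun k hk => h k (by omega))).tail (h m (by omega))

lemma cycle_of_iterates' {V : Type*} [Fintype V] {r : V → V → Prop} (f : ℕ → V)
    (h : ∀ k, r (f k) (f (k+1))) : ∃ x, Relation.TransGen r x x := by
  obtain ⟨i, j, hne, hij⟩ : ∃ i j : Fin (Fintype.card V + 1), i ≠ j ∧ f i = f j := by
    obtain ⟨i, j, hne, hij⟩ := Fintype.exists_ne_map_eq_of_card_lt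
      (fun i : Fin (Fintype.card V + 1) => f i) (by simp)
    exact ⟨i, j, hne, hij⟩
  have key : ∀ i j : ℕ, i < j → f i = f j → ∃ x, Relation.TransGen r x x := by
    intro i j hlt heq
    have h2 : Relation.TransGen r (f i) (f j) := by
      have := chain_transGen' (fun k => f (i + k)) (m := j - i) (by omega)
        (fun k hk => h (i + k))
      simpa [Nat.add_sub_cancel' hlt.le] using this
    exact ⟨f j, heq ▸ h2⟩
  rcases lt_or_gt_of_ne (fun hc : (i:ℕ) = j => hne (Fin.ext hc)) with hlt | hlt
  · exact key i j hlt hij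
  · exact key j i hlt hij.symm

lemma wf_of_acyclic' {V : Type*} [Fintype V] {r : V → V → Prop}
    (hac : ¬ ∃ x, Relation.TransGen r x x) : WellFounded r := by
  haveI : IsTrans V (Relation.TransGen r) := ⟨fun _ _ _ h h' => h.trans h'⟩
  haveI : IsIrrefl V (Relation.TransGen r) := ⟨fun x hx => hac ⟨x, hx⟩⟩
  exact Subrelation.wf (fun h => Relation.TransGen.single h)
    (Finite.wellFounded_of_trans_of_irrefl _)

lemma source_unique' {V : Type*} [Fintype V] {r : V → V → Prop}
    (hac : ¬ ∃ x, Relation.TransGen r x x)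
    (hind : ∀ a b c, r a c → r b c → a = b) (c : V) :
    ∀ a b, Relation.ReflTransGen r a c → Relation.ReflTransGen r b c →
      (¬ ∃ p, r p a) → (¬ ∃ p, r p b) → a = b := by
  refine (wf_of_acyclic' hac).induction
    (C := fun c => ∀ a b, Relation.ReflTransGen r a c → Relation.ReflTransGen r b c →
      (¬ ∃ p, r p a) → (¬ ∃ p, r p b) → a = b) c ?_
  intro c ih a b ha hb hna hnb
  rcases ha.cases_tail with heqa | ⟨d1, had, hd1⟩
  · rcases hb.cases_tail with heqb | ⟨d2, hbd, hd2⟩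
    · rw [← heqa, ← heqb]
    · exact absurd ⟨d2, heqa ▸ hd2⟩ hna
  · rcases hb.cases_tail with heqb | ⟨d2, hbd, hd2⟩
    · exact absurd ⟨d1, heqb ▸ hd1⟩ hnb
    · have : d1 = d2 := hind d1 d2 c hd1 hd2
      exact ih d1 hd1 a b had (this ▸ hbd) hna hnb

lemma transGen_insert' {V : Type*} [DecidableEq V] {Z : Finset (V × V)} {u v x y : V}
    (h : Relation.TransGen (fun a b => (a, b) ∈ insert (u, v) Z) x y) :
    Relation.TransGen (fun a b => (a, b) ∈ Z) x y ∨
      (Relation.ReflTransGen (fun a b => (a, b) ∈ Z) x u ∧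
       Relation.ReflTransGen (fun a b => (a, b) ∈ Z) v y) := by
  induction h with
  | single h =>
    rcases Finset.mem_insert.mp h with h | h
    · obtain ⟨h1, h2⟩ := Prod.mk.injEq .. ▸ h
      right
      exact ⟨by rw [h1], by rw [h2]⟩
    · exact Or.inl (Relation.TransGen.single h)
  | tail hxb hby ih =>
    rename_i b c _
    rcases Finset.mem_insert.mp hby with h | h
    · obtain ⟨h1, h2⟩ := Prod.mk.injEq .. ▸ h
      rcases ih with ht | ⟨hxu, hvb⟩
      · exact Or.inr ⟨h1 ▸ ht.to_reflTransGen, h2 ▸ Relation.ReflTransGen.refl⟩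
      · exact Or.inr ⟨hxu, h2 ▸ Relation.ReflTransGen.refl⟩
    · rcases ih with ht | ⟨hxu, hvb⟩
      · exact Or.inl (ht.tail h)
      · exact Or.inr ⟨hxu, hvb.tail h⟩

end Aux

/-- A set of edges forming a collection of vertex-disjoint directed paths:
every vertex has at most one outgoing and at most one incoming edge, and there
is no directed cycle. -/
def IsPathCollection {V : Type*} (Z : Finset (V × V)) : Prop :=
  (∀ e ∈ Z, ∀ f ∈ Z, e.1 = f.1 → e = f) ∧
  (∀ e ∈ Z, ∀ f ∈ Z, e.2 = f.2 → e = f) ∧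
  ¬ ∃ x : V, Relation.TransGen (fun a b => (a, b) ∈ Z) x x

section Main
variable {V : Type*} [Fintype V] [DecidableEq V]

lemma exists_unique_src' {Z : Finset (V × V)} (hZ : IsPathCollection Z)
    {x : V} (hx : x ∈ Z.image Prod.fst) : ∃! e, e ∈ Z ∧ e.1 = x := by
  obtain ⟨e, he, hex⟩ := Finset.mem_image.mp hx
  exact ⟨e, ⟨he, hex⟩, fun f ⟨hf, hfx⟩ => hZ.1 f hf e he (by rw [hfx, hex])⟩

lemma card_image_fst' {Z : Finset (V × V)} (hZ : IsPathCollection Z) :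
    (Z.image Prod.fst).card = Z.card :=
  Finset.card_image_of_injOn (fun e he f hf h => hZ.1 e he f hf h)

lemma card_image_snd' {Z : Finset (V × V)} (hZ : IsPathCollection Z) :
    (Z.image Prod.snd).card = Z.card :=
  Finset.card_image_of_injOn (fun e he f hf h => hZ.2.1 e he f hf h)

lemma card_lt_of_pathCollection' [Nonempty V] {Z : Finset (V × V)}
    (hZ : IsPathCollection Z) : Z.card < Fintype.card V := by
  by_contra h
  push_neg at h
  have himg : Z.image Prod.fst = Finset.univ := by
    apply Finset.eq_univ_of_card
    have := Finset.card_le_univ (Z.image Prod.fst)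
    have := card_image_fst' hZ
    omega
  have hall : ∀ x : V, x ∈ Z.image Prod.fst := fun x => himg ▸ Finset.mem_univ x
  set f : V → V := fun x => (Z.choose _ (exists_unique_src' hZ (hall x))).2 with hf
  have hmem : ∀ x, (x, f x) ∈ Z := by
    intro x
    have h1 := Z.choose_mem _ (exists_unique_src' hZ (hall x))
    have h2 := Z.choose_property _ (exists_unique_src' hZ (hall x))
    have : (x, f x) = Z.choose _ (exists_unique_src' hZ (hall x)) :=
      Prod.ext_iff.mpr ⟨h2.symm, rfl⟩
    rw [this]; exact h1
  obtain ⟨x0⟩ := ‹Nonempty V›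
  obtain ⟨x, hx⟩ := cycle_of_iterates' (r := fun a b => (a,b) ∈ Z) (fun k => f^[k] x0) (fun k => by
    show (f^[k] x0, f^[k+1] x0) ∈ Z
    rw [Function.iterate_succ_apply']
    exact hmem _)
  exact hZ.2.2 ⟨x, hx⟩

lemma extend_one' {Z : Finset (V × V)} (hZ : IsPathCollection Z)
    (hcard : Z.card + 1 < Fintype.card V) :
    ∃ Z' : Finset (V × V), IsPathCollection Z' ∧ Z ⊆ Z' ∧ Z'.card = Z.card + 1 := by
  set r : V → V → Prop := fun a b => (a, b) ∈ Z with hr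
  have hS : (Z.image Prod.fst).card < Fintype.card V := by
    rw [card_image_fst' hZ]; omega
  obtain ⟨u, hu⟩ : ∃ u, u ∉ Z.image Prod.fst := by
    by_contra hc
    push_neg at hc
    have : Z.image Prod.fst = Finset.univ := Finset.eq_univ_iff_forall.mpr hc
    rw [this, Finset.card_univ] at hS
    omega
  have hT2 : 2 ≤ (Finset.univ \ Z.image Prod.snd).card := by
    have h1 : (Z.image Prod.snd).card = Z.card := card_image_snd' hZ
    have h2 := Finset.card_sdiff_of_subset (Finset.subset_univ (Z.image Prod.snd))
    rw [Finset.card_univ] at h2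
    omega
  obtain ⟨v, hvT, hvu⟩ : ∃ v, v ∉ Z.image Prod.snd ∧
      ¬ Relation.ReflTransGen r v u := by
    by_contra hc
    push_neg at hc
    obtain ⟨v1, hv1, v2, hv2, hne⟩ := Finset.one_lt_card.mp hT2
    rw [Finset.mem_sdiff] at hv1 hv2
    have h1 := hc v1 hv1.2
    have h2 := hc v2 hv2.2
    have hind : ∀ a b c : V, r a c → r b c → a = b := by
      intro a b c hac hbc
      have := hZ.2.1 (a, c) hac (b, c) hbc rfl
      exact congrArg Prod.fst this
    have hnoin : ∀ x, x ∉ Z.image Prod.snd → ¬ ∃ p, r p x := by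
      intro x hx ⟨p, hp⟩
      exact hx (Finset.mem_image.mpr ⟨(p, x), hp, rfl⟩)
    exact hne (source_unique' hZ.2.2 hind u v1 v2 h1 h2
      (hnoin v1 hv1.2) (hnoin v2 hv2.2))
  have huv : u ≠ v := fun h => hvu (h ▸ Relation.ReflTransGen.refl)
  have henotin : (u, v) ∉ Z := fun h => hu (Finset.mem_image.mpr ⟨(u, v), h, rfl⟩)
  refine ⟨insert (u, v) Z, ⟨?_, ?_, ?_⟩, Finset.subset_insert _ _,
    Finset.card_insert_of_notMem henotin⟩
  · intro e he f hf h
    rcases Finset.mem_insert.mp he with he | he <;>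
      rcases Finset.mem_insert.mp hf with hf | hf
    · rw [he, hf]
    · exfalso; apply hu
      exact Finset.mem_image.mpr ⟨f, hf, by rw [← h, he]⟩
    · exfalso; apply hu
      exact Finset.mem_image.mpr ⟨e, he, by rw [h, hf]⟩
    · exact hZ.1 e he f hf h
  · intro e he f hf h
    rcases Finset.mem_insert.mp he with he | he <;>
      rcases Finset.mem_insert.mp hf with hf | hf
    · rw [he, hf]
    · exfalso; apply hvT
      exact Finset.mem_image.mpr ⟨f, hf, by rw [← h, he]⟩
    · exfalso; apply hvT
      exact Finset.mem_image.mpr ⟨e, he, by rw [h, hf]⟩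
    · exact hZ.2.1 e he f hf h
  · rintro ⟨x, hx⟩
    rcases transGen_insert' hx with ht | ⟨hxu, hvx⟩
    · exact hZ.2.2 ⟨x, ht⟩
    · exact hvu (hvx.trans hxu)

lemma to_tour' (hV : 2 ≤ Fintype.card V) {Z : Finset (V × V)}
    (hZ : IsPathCollection Z) (hn : Z.card + 1 = Fintype.card V) :
    ∃ τ : Equiv.Perm V, τ.IsCycle ∧ τ.support = Finset.univ ∧
      ∀ e ∈ Z, τ e.1 = e.2 := by
  set S := Z.image Prod.fst with hSdef
  set T := Z.image Prod.snd with hTdef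
  have hScard : S.card = Z.card := card_image_fst' hZ
  have hTcard : T.card = Z.card := card_image_snd' hZ
  have huniv : Finset.univ.card = Fintype.card V := Finset.card_univ
  obtain ⟨u, hSc⟩ : ∃ u, Finset.univ \ S = {u} := by
    apply Finset.card_eq_one.mp
    have := Finset.card_sdiff_of_subset (Finset.subset_univ S)
    omega
  obtain ⟨v, hTc⟩ : ∃ v, Finset.univ \ T = {v} := by
    apply Finset.card_eq_one.mp
    have := Finset.card_sdiff_of_subset (Finset.subset_univ T)
    omega
  have huS : u ∉ S := by
    have : u ∈ Finset.univ \ S := hSc ▸ Finset.mem_singleton_self u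
    exact (Finset.mem_sdiff.mp this).2
  have hvT : v ∉ T := by
    have : v ∈ Finset.univ \ T := hTc ▸ Finset.mem_singleton_self v
    exact (Finset.mem_sdiff.mp this).2
  have hmemS : ∀ x : V, x ∉ S → x = u := by
    intro x hx
    have : x ∈ Finset.univ \ S := Finset.mem_sdiff.mpr ⟨Finset.mem_univ x, hx⟩
    exact Finset.mem_singleton.mp (hSc ▸ this)
  set g : V → V := fun x =>
    if hx : x ∈ S then (Z.choose (fun e => e.1 = x) (exists_unique_src' hZ hx)).2
    else v with hgdef
  have hgmem : ∀ x, x ∈ S → (x, g x) ∈ Z := by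
    intro x hx
    have h1 := Z.choose_mem _ (exists_unique_src' hZ hx)
    have h2 := Z.choose_property _ (exists_unique_src' hZ hx)
    have : (x, g x) = Z.choose _ (exists_unique_src' hZ hx) := by
      rw [hgdef]; simp only [dif_pos hx]
      exact Prod.ext_iff.mpr ⟨h2.symm, rfl⟩
    rw [this]; exact h1
  have hgu : g u = v := by rw [hgdef]; simp only [dif_neg huS]
  have hgT : ∀ x, x ∈ S → g x ∈ T :=
    fun x hx => Finset.mem_image.mpr ⟨(x, g x), hgmem x hx, rfl⟩
  have hedge : ∀ e ∈ Z, g e.1 = e.2 := by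
    intro e he
    have hx : e.1 ∈ S := Finset.mem_image.mpr ⟨e, he, rfl⟩
    have := hZ.1 (e.1, g e.1) (hgmem _ hx) e he rfl
    exact congrArg Prod.snd this
  have huv : u ≠ v := by
    intro h
    obtain ⟨x0, -, hx0⟩ := Finset.exists_mem_ne
      (by rw [Finset.card_univ]; omega : 1 < (Finset.univ : Finset V).card) u
    have hiter : ∀ k, g^[k] x0 ≠ u := by
      intro k
      induction k with
      | zero => simpa using hx0
      | succ k ih =>
        rw [Function.iterate_succ_apply']
        have hkS : g^[k] x0 ∈ S := by
          by_contra hc; exact ih (hmemS _ hc)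
        intro hc
        exact hvT (h ▸ hc ▸ hgT _ hkS)
    obtain ⟨x, hx⟩ := cycle_of_iterates' (r := fun a b => (a, b) ∈ Z)
      (fun k => g^[k] x0) (fun k => by
        show (g^[k] x0, g^[k+1] x0) ∈ Z
        rw [Function.iterate_succ_apply']
        apply hgmem
        by_contra hc
        exact hiter k (hmemS _ hc))
    exact hZ.2.2 ⟨x, hx⟩
  have hinj : Function.Injective g := by
    intro x y h
    by_cases hx : x ∈ S <;> by_cases hy : y ∈ S
    · have := hZ.2.1 (x, g x) (hgmem x hx) (y, g y) (hgmem y hy) h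
      exact congrArg Prod.fst this
    · exfalso
      have : g y = v := by rw [hgdef]; simp only [dif_neg hy]
      exact hvT (this ▸ h ▸ hgT x hx)
    · exfalso
      have : g x = v := by rw [hgdef]; simp only [dif_neg hx]
      exact hvT (this ▸ h ▸ hgT y hy)
    · rw [hmemS x hx, hmemS y hy]
  set τ : Equiv.Perm V := Equiv.ofBijective g (Finite.injective_iff_bijective.mp hinj)
    with hτdef
  have hτapp : ∀ x, τ x = g x := fun x => rfl
  have hfpf : ∀ x, τ x ≠ x := by
    intro x hc
    rw [hτapp] at hc
    by_cases hx : x ∈ S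
    · have hmem := hgmem x hx
      rw [hc] at hmem
      exact hZ.2.2 ⟨x, Relation.TransGen.single hmem⟩
    · have hxu := hmemS x hx
      subst hxu
      rw [hgu] at hc
      exact huv hc.symm
  have hsup : τ.support = Finset.univ :=
    Finset.eq_univ_iff_forall.mpr (fun x => Equiv.Perm.mem_support.mpr (hfpf x))
  have hreach : ∀ y : V, ∃ k : ℕ, (τ ^ k) y = u := by
    intro y
    by_contra hc
    push_neg at hc
    have hchain : ∀ k, ((τ ^ k) y, (τ ^ (k+1)) y) ∈ Z := by
      intro k
      have hS : (τ ^ k) y ∈ S := by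
        by_contra h'; exact hc k (hmemS _ h')
      have : (τ ^ (k+1)) y = g ((τ ^ k) y) := by
        rw [pow_succ', Equiv.Perm.mul_apply, hτapp]
      rw [this]
      exact hgmem _ hS
    have hpos : 0 < orderOf τ := orderOf_pos τ
    have := chain_transGen' (r := fun a b => (a, b) ∈ Z)
      (fun k => (τ ^ k) y) hpos (fun k _ => hchain k)
    have h0 : ((fun k => (τ ^ k) y) 0) = y := by simp
    have hm : ((fun k => (τ ^ k) y) (orderOf τ)) = y := by
      simp [pow_orderOf_eq_one]
    rw [show (τ ^ 0) y = y from h0, show (τ ^ orderOf τ) y = y from hm] at this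
    exact hZ.2.2 ⟨y, this⟩
  have hcyc : τ.IsCycle := by
    refine ⟨u, ?_, ?_⟩
    · rw [hτapp, hgu]; exact huv.symm
    · intro y hy
      obtain ⟨k, hk⟩ := hreach y
      exact Equiv.Perm.SameCycle.symm ⟨(k : ℤ), by rw [zpow_natCast]; exact hk⟩
  exact ⟨τ, hcyc, hsup, fun e he => by rw [hτapp]; exact hedge e he⟩

lemma extend_full' (hV : 2 ≤ Fintype.card V) :
    ∀ (k : ℕ) (Z : Finset (V × V)), IsPathCollection Z →
      Fintype.card V = Z.card + 1 + k →
    ∃ τ : Equiv.Perm V, τ.IsCycle ∧ τ.support = Finset.univ ∧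
      ∀ e ∈ Z, τ e.1 = e.2 := by
  intro k
  induction k with
  | zero => exact fun Z hZ h => to_tour' hV hZ (by omega)
  | succ k ih =>
    intro Z hZ h
    obtain ⟨Z', hZ', hsub, hc⟩ := extend_one' hZ (by omega)
    obtain ⟨τ, h1, h2, h3⟩ := ih Z' hZ' (by omega)
    exact ⟨τ, h1, h2, fun e he => h3 e (hsub he)⟩

end Main

section Glue
variable {V : Type*} [Fintype V] [DecidableEq V]

lemma weight_count' (w : V → V → ℝ) (σ : Equiv.Perm V) :
    ∑ e : V × V, (if σ e.1 = e.2 then (2:ℝ) else 0) * w e.1 e.2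
      = 2 * ∑ v, w v (σ v) := by
  rw [Fintype.sum_prod_type, Finset.mul_sum]
  refine Finset.sum_congr rfl (fun a _ => ?_)
  simp [ite_mul, Finset.sum_ite_eq]

lemma swap_count' (w : V → V → ℝ) (Z : Fin 8 → Finset (V × V)) :
    ∑ i : Fin 8, ∑ e ∈ Z i, w e.1 e.2
      = ∑ e : V × V,
        ((Finset.univ.filter fun i : Fin 8 => e ∈ Z i).card : ℝ) * w e.1 e.2 := by
  have h1 : ∀ i : Fin 8, ∑ e ∈ Z i, w e.1 e.2
      = ∑ e : V × V, if e ∈ Z i then w e.1 e.2 else 0 := by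
    intro i
    rw [Finset.sum_ite_mem, Finset.univ_inter]
  simp_rw [h1]
  rw [Finset.sum_comm]
  refine Finset.sum_congr rfl (fun e _ => ?_)
  rw [Finset.sum_ite, Finset.sum_const_zero, add_zero, Finset.sum_const,
    nsmul_eq_mul]

end Glue

/-- If `Cmax` is a maximum-weight cycle cover, `C1` and `C2` are
cycle covers of weight at least `OPT` (the maximum weight of a Hamiltonian
tour), and the multiset `2·E(Cmax) + 2·E(C1) + 2·E(C2)` can be partitioned
into eight collections of vertex-disjoint directed paths, then there is a
Hamiltonian tour of weight at least `(3/4)·OPT`. -/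
theorem stmt_16 {V : Type*} [Fintype V] [DecidableEq V]
    (hV : 2 ≤ Fintype.card V)
    (w : V → V → ℝ) (hw : ∀ u v : V, u ≠ v → 0 ≤ w u v)
    (Cmax : Equiv.Perm V) (hCmax : ∀ v, Cmax v ≠ v)
    (hmax : ∀ σ' : Equiv.Perm V, (∀ v, σ' v ≠ v) →
      ∑ v, w v (σ' v) ≤ ∑ v, w v (Cmax v))
    (C1 : Equiv.Perm V) (hC1 : ∀ v, C1 v ≠ v)
    (C2 : Equiv.Perm V) (hC2 : ∀ v, C2 v ≠ v)
    (OPT : ℝ)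
    (hOPT : IsGreatest ((fun τ : Equiv.Perm V => ∑ v, w v (τ v)) ''
      {τ : Equiv.Perm V | τ.IsCycle ∧ τ.support = Finset.univ}) OPT)
    (hC1w : OPT ≤ ∑ v, w v (C1 v))
    (hC2w : OPT ≤ ∑ v, w v (C2 v))
    (Z : Fin 8 → Finset (V × V))
    (hpath : ∀ i : Fin 8, IsPathCollection (Z i))
    (hpart : ∀ e : V × V,
      (Finset.univ.filter fun i : Fin 8 => e ∈ Z i).card =
        (if Cmax e.1 = e.2 then 2 else 0) + (if C1 e.1 = e.2 then 2 else 0) +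
          (if C2 e.1 = e.2 then 2 else 0)) :
    ∃ τ : Equiv.Perm V, τ.IsCycle ∧ τ.support = Finset.univ ∧
      (3 / 4) * OPT ≤ ∑ v, w v (τ v) := by
  haveI : Nonempty V := Fintype.card_pos_iff.mp (by omega)
  obtain ⟨τ0, ⟨hc0, hs0⟩, hval0⟩ := hOPT.1
  have hfpf0 : ∀ v, τ0 v ≠ v := fun v =>
    Equiv.Perm.mem_support.mp (hs0 ▸ Finset.mem_univ v)
  have hCmaxw : OPT ≤ ∑ v, w v (Cmax v) := by
    have h0 : OPT = ∑ v, w v (τ0 v) := hval0.symm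
    rw [h0]
    exact hmax τ0 hfpf0
  have htot : 6 * OPT ≤ ∑ i : Fin 8, ∑ e ∈ Z i, w e.1 e.2 := by
    rw [swap_count' w Z]
    have hcast : ∀ e : V × V,
        ((Finset.univ.filter fun i : Fin 8 => e ∈ Z i).card : ℝ)
        = (if Cmax e.1 = e.2 then (2:ℝ) else 0)
          + (if C1 e.1 = e.2 then (2:ℝ) else 0)
          + (if C2 e.1 = e.2 then (2:ℝ) else 0) := by
      intro e
      rw [hpart e]
      push_cast [apply_ite (Nat.cast : ℕ → ℝ)]
      ring
    simp_rw [hcast, add_mul]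
    rw [Finset.sum_add_distrib, Finset.sum_add_distrib,
      weight_count' w Cmax, weight_count' w C1, weight_count' w C2]
    linarith
  obtain ⟨i, hi⟩ : ∃ i : Fin 8, (3/4) * OPT ≤ ∑ e ∈ Z i, w e.1 e.2 := by
    by_contra hc
    push_neg at hc
    have hlt := Finset.sum_lt_sum_of_nonempty (Finset.univ_nonempty (α := Fin 8))
      (fun i _ => hc i)
    rw [Finset.sum_const, Finset.card_univ, Fintype.card_fin] at hlt
    have h8 : (8:ℕ) • ((3/4) * OPT) = 6 * OPT := by
      rw [nsmul_eq_mul]; push_cast; ring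
    rw [h8] at hlt
    linarith
  have hZi := hpath i
  have hcard : (Z i).card < Fintype.card V := card_lt_of_pathCollection' hZi
  obtain ⟨τ, h1, h2, h3⟩ := extend_full' hV (Fintype.card V - (Z i).card - 1)
    (Z i) hZi (by omega)
  refine ⟨τ, h1, h2, ?_⟩
  have hτfpf : ∀ v, τ v ≠ v := fun v =>
    Equiv.Perm.mem_support.mp (h2 ▸ Finset.mem_univ v)
  have hsum : ∑ e ∈ Z i, w e.1 e.2 ≤ ∑ v, w v (τ v) := by
    have e1 : ∑ e ∈ Z i, w e.1 e.2 = ∑ e ∈ Z i, w e.1 (τ e.1) :=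
      Finset.sum_congr rfl (fun e he => by rw [h3 e he])
    have e2 : ∑ v ∈ (Z i).image Prod.fst, w v (τ v) = ∑ e ∈ Z i, w e.1 (τ e.1) :=
      Finset.sum_image (fun e he f hf h => hZi.1 e he f hf h)
    rw [e1, ← e2]
    apply Finset.sum_le_sum_of_subset_of_nonneg (Finset.subset_univ _)
    intro v _ _
    exact hw v (τ v) (fun h => hτfpf v h.symm)
  linarith
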